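/- Let d be a positive even integer and s a positive integer with 2s ≤ d. Every two distinct elements u, v of the set (X_0 × {*}^s) ∪ (X_s × I^s) ⊆ S^d satisfy 1 ≤ dist(u,v) ≤ d - s; consequently, n(d-s, d) ≥ Σ_{i=0}^{d/2 - s} C(d-s, i) + 2^s · Σ_{i=d/2}^{d-s} C(d-s, i). -/

import Mathlib

/-- Strings of length `d` over the alphabet `S = {0,1,*}`; `none` is the joker `*`. -/
abbrev JString (d : ℕ) := Fin d → Option Bool

/-- The distance between two strings over `{0,1,*}`: the number of positions where both
entries are binary digits and they differ. -/
def jDist {d : ℕ} (u v : JString d) : ℕ :=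
  (Finset.univ.filter fun i => ∃ a b : Bool, u i = some a ∧ v i = some b ∧ a ≠ b).card

/-- `nkd k d` is `n(k,d)`: the maximum size of a family of strings in `S^d` any two
distinct members of which are at distance at least `1` and at most `k`. -/
noncomputable def nkd (k d : ℕ) : ℕ :=
  sSup {m | ∃ F : Finset (JString d),
    (∀ u ∈ F, ∀ v ∈ F, u ≠ v → 1 ≤ jDist u v ∧ jDist u v ≤ k) ∧ F.card = m}

/-- The weight `|x|` of a binary string. -/
def wt {n : ℕ} (x : Fin n → Bool) : ℕ := (Finset.univ.filter fun i => x i = true).card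

/-- The inner product `⟨x,y⟩` of two binary strings. -/
def ip {n : ℕ} (x y : Fin n → Bool) : ℕ :=
  (Finset.univ.filter fun i => x i = true ∧ y i = true).card

/-- The antipode `x̄` of a binary string. -/
def antipode {n : ℕ} (x : Fin n → Bool) : Fin n → Bool := fun i => !(x i)

/-- `t(ε)` (0-based): the largest index at which `ε` differs from its last entry; for
nonconstant `ε` this is the unique (0-based) index `i` with `ε i ≠ ε (i+1) = ⋯ = ε (s-1)`. -/
noncomputable def tIdx {s : ℕ} (ε : Fin s → Bool) : ℕ :=
  sSup {i : ℕ | ∃ h : i < s, ∃ h' : s - 1 < s, ε ⟨i, h⟩ ≠ ε ⟨s - 1, h'⟩}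

/-- The set `A_ε = {ε_1} × ⋯ × {ε_{t(ε)}} × I^{s-1-t(ε)} ⊆ I^{s-1}`. -/
def Aset {s : ℕ} (ε : Fin s → Bool) : Set (Fin (s - 1) → Bool) :=
  {x | ∀ j : Fin (s - 1), (j : ℕ) ≤ tIdx ε →
    x j = ε ⟨(j : ℕ), Nat.lt_of_lt_of_le j.isLt (Nat.sub_le s 1)⟩}

/-- The sets `X_k ⊆ I^{d-s}`: `X_0 = {|x| ≤ d/2 - s}`, `X_k = {|x| = d/2 - s + k}` for
`0 < k < s`, and `X_s = {|x| ≥ d/2}`. -/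
def Xk (d s k : ℕ) : Set (Fin (d - s) → Bool) :=
  if k = 0 then {x | wt x ≤ d / 2 - s}
  else if k = s then {x | d / 2 ≤ wt x}
  else {x | wt x = d / 2 - s + k}

/-- The last `m` coordinates of a binary string of length `n` (junk values if `m > n`). -/
def suffix (m : ℕ) {n : ℕ} (x : Fin n → Bool) : Fin m → Bool :=
  fun j => if h : n - m + (j : ℕ) < n then x ⟨n - m + (j : ℕ), h⟩ else false

/-- The set `B_ε ⊆ I^{d-s}`: `B_α = X_0`, `B_ω = X_s`, and for `ε ∉ {α,ω}`,
`B_ε = X_{|ε|} ∩ (I^{d-2s+1} × A_ε)`, identifying `I^{d-s}` with `I^{d-2s+1} × I^{s-1}`. -/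
def Bset (d : ℕ) {s : ℕ} (ε : Fin s → Bool) : Set (Fin (d - s) → Bool) :=
  if ε = (fun _ => false) then Xk d s 0
  else if ε = (fun _ => true) then Xk d s s
  else Xk d s (wt ε) ∩ {x | suffix (s - 1) x ∈ Aset ε}

/-- Concatenation of a binary string of length `d - s` with a string over `{0,1,*}` of
length `s`, producing a string over `{0,1,*}` of length `d`. -/
def glue {d s : ℕ} (x : Fin (d - s) → Bool) (w : Fin s → Option Bool) : JString d :=
  fun i => if h : (i : ℕ) < d - s then some (x ⟨(i : ℕ), h⟩)
    else if h' : (i : ℕ) - (d - s) < s then w ⟨(i : ℕ) - (d - s), h'⟩ else none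

/-- The set `*^ε = *^{ε_1} × ⋯ × *^{ε_s} ⊆ S^s`, where `*^0 = {*}` and `*^1 = {0,1}`. -/
def starSet {s : ℕ} (ε : Fin s → Bool) : Set (Fin s → Option Bool) :=
  {w | ∀ j, if ε j = true then ∃ b : Bool, w j = some b else w j = none}

/-- The set `C_ε = B_ε × *^ε ⊆ S^d`. -/
def Cset (d : ℕ) {s : ℕ} (ε : Fin s → Bool) : Set (JString d) :=
  {u | ∃ x ∈ Bset d ε, ∃ w ∈ starSet ε, u = glue x w}

/-- The set `(X_0 × {*}^s) ∪ (X_s × I^s) ⊆ S^d`: strings whose first `d-s` symbols lie in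
`X_0` and whose last `s` symbols are jokers, together with strings whose first `d-s`
symbols lie in `X_s` and whose last `s` symbols are arbitrary binary digits. -/
def Dset (d s : ℕ) : Set (JString d) :=
  {u | ∃ x ∈ Xk d s 0, u = glue x (fun _ => (none : Option Bool))} ∪
  {u | ∃ x ∈ Xk d s s, ∃ z : Fin s → Bool, u = glue x (fun j => some (z j))}


open Finset

/-- Hamming distance of binary strings. -/
def dH {n : ℕ} (x y : Fin n → Bool) : ℕ := (Finset.univ.filter fun i => x i ≠ y i).card

lemma glue_lt {d s : ℕ} (x : Fin (d-s) → Bool) (w : Fin s → Option Bool) (i : Fin d)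
    (h : (i:ℕ) < d - s) : glue x w i = some (x ⟨i, h⟩) := dif_pos h

lemma glue_ge {d s : ℕ} (hsd : s ≤ d) (x : Fin (d-s) → Bool) (w : Fin s → Option Bool) (i : Fin d)
    (h : ¬ (i:ℕ) < d - s) : glue x w i = w ⟨(i:ℕ) - (d - s), by have := i.isLt; omega⟩ := by
  have hlt : (i:ℕ) - (d-s) < s := by have := i.isLt; omega
  rw [glue]; rw [dif_neg h, dif_pos hlt]

lemma jDist_glue {d s : ℕ} (hsd : s ≤ d) (x y : Fin (d-s) → Bool) (w w' : Fin s → Option Bool) :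
    jDist (glue x w) (glue y w') = dH x y + jDist w w' := by
  classical
  set P : Fin d → Prop := fun i => ∃ a b : Bool, glue x w i = some a ∧ glue y w' i = some b ∧ a ≠ b with hP
  have hsplit := Finset.card_filter_add_card_filter_not
    (s := Finset.univ.filter P) (p := fun i : Fin d => (i:ℕ) < d - s)
  have h1 : ((Finset.univ.filter P).filter (fun i : Fin d => (i:ℕ) < d - s)).card = dH x y := by
    refine Finset.card_bij' (i := fun (a : Fin d) ha => (⟨a, (Finset.mem_filter.mp ha).2⟩ : Fin (d-s)))
      (j := fun (b : Fin (d-s)) _ => (⟨(b:ℕ), lt_of_lt_of_le b.isLt (Nat.sub_le d s)⟩ : Fin d)) ?_ ?_ ?_ ?_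
    · intro a ha
      obtain ⟨haP, halt⟩ := Finset.mem_filter.mp ha
      obtain ⟨-, a1, b1, hu, hv, hne⟩ := Finset.mem_filter.mp haP
      rw [glue_lt x w a halt] at hu
      rw [glue_lt y w' a halt] at hv
      simp only [Finset.mem_filter, Finset.mem_univ, true_and]
      cases hu; cases hv; exact hne
    · intro b hb
      simp only [Finset.mem_filter, Finset.mem_univ, true_and] at hb ⊢
      refine ⟨⟨x b, y b, ?_, ?_, hb⟩, b.isLt⟩
      · rw [glue_lt x w ⟨(b:ℕ), lt_of_lt_of_le b.isLt (Nat.sub_le d s)⟩ b.isLt]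
      · rw [glue_lt y w' ⟨(b:ℕ), lt_of_lt_of_le b.isLt (Nat.sub_le d s)⟩ b.isLt]
    · intro a ha; apply Fin.ext; rfl
    · intro b hb; apply Fin.ext; rfl
  have h2 : ((Finset.univ.filter P).filter (fun i : Fin d => ¬ (i:ℕ) < d - s)).card = jDist w w' := by
    unfold jDist
    refine Finset.card_bij'
      (i := fun (a : Fin d) ha => (⟨(a:ℕ) - (d-s), by have := a.isLt; have := (Finset.mem_filter.mp ha).2; omega⟩ : Fin s))
      (j := fun (b : Fin s) _ => (⟨(d-s) + (b:ℕ), by have := b.isLt; omega⟩ : Fin d)) ?_ ?_ ?_ ?_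
    · intro a ha
      obtain ⟨haP, halt⟩ := Finset.mem_filter.mp ha
      obtain ⟨-, a1, b1, hu, hv, hne⟩ := Finset.mem_filter.mp haP
      rw [glue_ge hsd x w a halt] at hu
      rw [glue_ge hsd y w' a halt] at hv
      simp only [Finset.mem_filter, Finset.mem_univ, true_and]
      exact ⟨a1, b1, hu, hv, hne⟩
    · intro b hb
      simp only [Finset.mem_filter, Finset.mem_univ, true_and] at hb ⊢
      have hge : ¬ (((⟨(d-s) + (b:ℕ), by have := b.isLt; omega⟩ : Fin d) : ℕ) < d - s) := by
        simp
      obtain ⟨a1, b1, hu, hv, hne⟩ := hb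
      refine ⟨⟨a1, b1, ?_, ?_, hne⟩, hge⟩
      · rw [glue_ge hsd x w _ hge]
        convert hu using 2
        apply Fin.ext; simp
      · rw [glue_ge hsd y w' _ hge]
        convert hv using 2
        apply Fin.ext; simp
    · intro a ha
      have := (Finset.mem_filter.mp ha).2
      apply Fin.ext; simp only []
      have := a.isLt; omega
    · intro b hb; apply Fin.ext; simp
  show (Finset.univ.filter P).card = dH x y + jDist w w'
  omega

lemma jDist_none_left {s : ℕ} (w : Fin s → Option Bool) :
    jDist (fun _ => (none : Option Bool)) w = 0 := by
  unfold jDist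
  simp

lemma jDist_none_right {s : ℕ} (w : Fin s → Option Bool) :
    jDist w (fun _ => (none : Option Bool)) = 0 := by
  unfold jDist
  simp

lemma jDist_some {s : ℕ} (z z' : Fin s → Bool) :
    jDist (fun j => some (z j)) (fun j => some (z' j)) = dH z z' := by
  unfold jDist dH
  congr 1
  ext i
  simp

lemma wt_le {n : ℕ} (x : Fin n → Bool) : wt x ≤ n := by
  have := Finset.card_filter_le (Finset.univ : Finset (Fin n)) (fun i => x i = true)
  simpa [wt] using this

lemma dH_le {n : ℕ} (x y : Fin n → Bool) : dH x y ≤ n := by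
  have := Finset.card_filter_le (Finset.univ : Finset (Fin n)) (fun i => x i ≠ y i)
  simpa [dH] using this

lemma dH_comm {n : ℕ} (x y : Fin n → Bool) : dH x y = dH y x := by
  unfold dH
  congr 1
  ext i
  simp only [Finset.mem_filter, Finset.mem_univ, true_and]
  exact ne_comm

lemma dH_pos {n : ℕ} {x y : Fin n → Bool} (h : x ≠ y) : 1 ≤ dH x y := by
  obtain ⟨i, hi⟩ := Function.ne_iff.mp h
  have : i ∈ Finset.univ.filter fun i => x i ≠ y i := by simp [hi]
  have := Finset.card_pos.mpr ⟨i, this⟩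
  simpa [dH] using this

lemma wt_le_wt_add_dH {n : ℕ} (x y : Fin n → Bool) : wt y ≤ wt x + dH x y := by
  unfold wt dH
  calc (Finset.univ.filter fun i => y i = true).card
      ≤ ((Finset.univ.filter fun i => x i = true) ∪ (Finset.univ.filter fun i => x i ≠ y i)).card := by
        apply Finset.card_le_card
        intro i hi
        simp only [Finset.mem_filter, Finset.mem_univ, true_and] at hi
        simp only [Finset.mem_union, Finset.mem_filter, Finset.mem_univ, true_and]
        cases hx : x i
        · right; simp [hx, hi]
        · left; rfl
    _ ≤ _ := Finset.card_union_le _ _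

lemma card_false {n : ℕ} (x : Fin n → Bool) :
    (Finset.univ.filter fun i => x i = false).card = n - wt x := by
  have h := Finset.card_filter_add_card_filter_not
    (s := (Finset.univ : Finset (Fin n))) (p := fun i => x i = true)
  have h2 : (Finset.univ.filter fun i : Fin n => ¬ x i = true) = (Finset.univ.filter fun i => x i = false) := by
    ext i; simp
  rw [h2] at h
  simp only [Finset.card_univ, Fintype.card_fin] at h
  unfold wt
  omega

lemma dH_le_sub {n : ℕ} (x y : Fin n → Bool) : dH x y ≤ (n - wt x) + (n - wt y) := by
  unfold dH
  calc (Finset.univ.filter fun i => x i ≠ y i).card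
      ≤ ((Finset.univ.filter fun i => x i = false) ∪ (Finset.univ.filter fun i => y i = false)).card := by
        apply Finset.card_le_card
        intro i hi
        simp only [Finset.mem_filter, Finset.mem_univ, true_and] at hi
        simp only [Finset.mem_union, Finset.mem_filter, Finset.mem_univ, true_and]
        cases hx : x i <;> cases hy : y i <;> simp_all
    _ ≤ _ := le_trans (Finset.card_union_le _ _) (by rw [card_false, card_false])

lemma glue_inj_left {d s : ℕ} {x y : Fin (d-s) → Bool} {w w' : Fin s → Option Bool}
    (h : glue x w = glue y w') : x = y := by
  funext i
  have hi : (i:ℕ) < d - s := i.isLt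
  have := congrFun h ⟨(i:ℕ), lt_of_lt_of_le hi (Nat.sub_le d s)⟩
  rw [glue_lt x w _ hi, glue_lt y w' _ hi] at this
  simpa using this

lemma glue_inj_right {d s : ℕ} (hsd : s ≤ d) {x y : Fin (d-s) → Bool} {w w' : Fin s → Option Bool}
    (h : glue x w = glue y w') : w = w' := by
  funext j
  have hj : (d - s) + (j:ℕ) < d := by have := j.isLt; omega
  have hge : ¬ ((d-s) + (j:ℕ) < d - s) := by omega
  have := congrFun h ⟨(d-s) + (j:ℕ), hj⟩
  rw [glue_ge hsd x w _ hge, glue_ge hsd y w' _ hge] at this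
  have he : (⟨(d-s) + (j:ℕ) - (d-s), by have := j.isLt; omega⟩ : Fin s) = j := by
    apply Fin.ext; simp
  rwa [he] at this

lemma card_wt_eq (n i : ℕ) :
    ((Finset.univ : Finset (Fin n → Bool)).filter fun x => wt x = i).card = n.choose i := by
  classical
  rw [show n.choose i = (Finset.powersetCard i (Finset.univ : Finset (Fin n))).card by
    rw [Finset.card_powersetCard]; simp]
  apply Finset.card_bij (i := fun x _ => Finset.univ.filter fun j => x j = true)
  · intro x hx
    simp only [Finset.mem_filter, Finset.mem_univ, true_and] at hx
    rw [Finset.mem_powersetCard]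
    exact ⟨Finset.filter_subset _ _ |>.trans (by simp), hx⟩
  · intro x hx y hy h
    funext j
    have := Finset.ext_iff.mp h j
    simp only [Finset.mem_filter, Finset.mem_univ, true_and] at this
    exact Bool.eq_iff_iff.mpr (by simpa using this)
  · intro t ht
    rw [Finset.mem_powersetCard] at ht
    refine ⟨fun j => decide (j ∈ t), ?_, ?_⟩
    · simp only [Finset.mem_filter, Finset.mem_univ, true_and]
      unfold wt
      have : (Finset.univ.filter fun j : Fin n => decide (j ∈ t) = true) = t := by
        ext j; simp
      rw [this]; exact ht.2
    · ext j; simp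

lemma card_wt_le_sum (n m : ℕ) :
    ((Finset.univ : Finset (Fin n → Bool)).filter fun x => wt x ≤ m).card
      = ∑ i ∈ Finset.range (m+1), n.choose i := by
  classical
  rw [Finset.card_eq_sum_card_fiberwise (f := wt) (t := Finset.range (m+1))
    (fun x hx => by simp only [Finset.mem_coe, Finset.mem_filter] at hx; exact Finset.mem_range.mpr (by omega))]
  refine Finset.sum_congr rfl fun i hi => ?_
  rw [← card_wt_eq n i]
  congr 1
  ext x
  simp only [Finset.mem_filter, Finset.mem_univ, true_and]
  have := Finset.mem_range.mp hi
  constructor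
  · rintro ⟨-, h⟩; exact h
  · intro h; exact ⟨by omega, h⟩

lemma card_wt_ge_sum (n m : ℕ) :
    ((Finset.univ : Finset (Fin n → Bool)).filter fun x => m ≤ wt x).card
      = ∑ i ∈ Finset.Icc m n, n.choose i := by
  classical
  rw [Finset.card_eq_sum_card_fiberwise (f := wt) (t := Finset.Icc m n)
    (fun x hx => by
      simp only [Finset.mem_coe, Finset.mem_filter] at hx
      exact Finset.mem_Icc.mpr ⟨hx.2, wt_le x⟩)]
  refine Finset.sum_congr rfl fun i hi => ?_
  rw [← card_wt_eq n i]
  congr 1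
  ext x
  simp only [Finset.mem_filter, Finset.mem_univ, true_and]
  have := Finset.mem_Icc.mp hi
  constructor
  · rintro ⟨-, h⟩; exact h
  · intro h; exact ⟨by omega, h⟩

/-- Let `d` be a positive even integer and `s` positive with `2s ≤ d`.
Any two distinct elements of `(X_0 × {*}^s) ∪ (X_s × I^s)` are at distance between `1` and
`d - s`; consequently `n(d-s,d) ≥ Σ_{i=0}^{d/2-s} C(d-s,i) + 2^s Σ_{i=d/2}^{d-s} C(d-s,i)`. -/
theorem Dset_neighborly_and_bound (d s : ℕ) (hd : 0 < d) (hde : Even d) (hs : 0 < s)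
    (hsd : 2 * s ≤ d) :
    (∀ u ∈ Dset d s, ∀ v ∈ Dset d s, u ≠ v → 1 ≤ jDist u v ∧ jDist u v ≤ d - s) ∧
    ∑ i ∈ Finset.range (d / 2 - s + 1), (d - s).choose i
        + 2 ^ s * ∑ i ∈ Finset.Icc (d / 2) (d - s), (d - s).choose i
      ≤ nkd (d - s) d := by
  classical
  obtain ⟨h2, hh2⟩ : ∃ h, d = 2 * h := hde.exists_two_nsmul d |>.imp fun h hh => by
    simpa [two_mul, smul_eq_mul] using hh
  have hsdle : s ≤ d := by omega
  -- Part 1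
  have part1 : ∀ u ∈ Dset d s, ∀ v ∈ Dset d s, u ≠ v → 1 ≤ jDist u v ∧ jDist u v ≤ d - s := by
    intro u hu v hv huv
    have hX0 : ∀ x, x ∈ Xk d s 0 → wt x ≤ d / 2 - s := by
      intro x hx; rw [Xk, if_pos rfl] at hx; exact hx
    have hXs : ∀ x, x ∈ Xk d s s → d / 2 ≤ wt x := by
      intro x hx; rw [Xk, if_neg hs.ne', if_pos rfl] at hx; exact hx
    rcases hu with ⟨x, hx, rfl⟩ | ⟨x, hx, z, rfl⟩ <;>
      rcases hv with ⟨y, hy, rfl⟩ | ⟨y, hy, z', rfl⟩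
    · -- both X0
      rw [jDist_glue hsdle, jDist_none_left]
      have hxy : x ≠ y := by rintro rfl; exact huv rfl
      exact ⟨by simpa using dH_pos hxy, by have := dH_le x y; omega⟩
    · -- X0 then Xs
      rw [jDist_glue hsdle, jDist_none_left]
      have h1 := wt_le_wt_add_dH x y
      have h3 := hX0 x hx
      have h4 := hXs y hy
      have h5 := dH_le x y
      constructor <;> omega
    · -- Xs then X0
      rw [jDist_glue hsdle, jDist_none_right, dH_comm]
      have h1 := wt_le_wt_add_dH y x
      have h3 := hXs x hx
      have h4 := hX0 y hy
      have h5 := dH_le y x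
      omega
    · -- both Xs
      rw [jDist_glue hsdle, jDist_some]
      have h3 := hXs x hx
      have h4 := hXs y hy
      have h5 := dH_le_sub x y
      have h6 := dH_le z z'
      have h7 := wt_le x
      have h8 := wt_le y
      constructor
      · by_cases hxy : x = y
        · subst hxy
          have hz : z ≠ z' := by
            rintro rfl; exact huv rfl
          have := dH_pos hz; omega
        · have := dH_pos hxy; omega
      · omega
  refine ⟨part1, ?_⟩
  -- Part 2: construct the family
  set F0 : Finset (JString d) :=
    ((Finset.univ : Finset (Fin (d-s) → Bool)).filter fun x => wt x ≤ d / 2 - s).image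
      (fun x => glue x (fun _ => (none : Option Bool))) with hF0
  set F1 : Finset (JString d) :=
    ((((Finset.univ : Finset (Fin (d-s) → Bool)).filter fun x => d / 2 ≤ wt x) ×ˢ
      (Finset.univ : Finset (Fin s → Bool))).image
      (fun p => glue p.1 (fun j => some (p.2 j)))) with hF1
  have hsub : ∀ u, u ∈ F0 ∪ F1 → u ∈ Dset d s := by
    intro u hu
    rcases Finset.mem_union.mp hu with h | h
    · obtain ⟨x, hx, rfl⟩ := Finset.mem_image.mp h
      simp only [Finset.mem_filter] at hx
      exact Or.inl ⟨x, by rw [Xk, if_pos rfl]; exact hx.2, rfl⟩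
    · obtain ⟨p, hp, rfl⟩ := Finset.mem_image.mp h
      simp only [Finset.mem_product, Finset.mem_filter] at hp
      exact Or.inr ⟨p.1, by rw [Xk, if_neg hs.ne', if_pos rfl]; exact hp.1.2, p.2, rfl⟩
  have hdisj : Disjoint F0 F1 := by
    rw [Finset.disjoint_left]
    rintro u h0 h1
    obtain ⟨x, -, rfl⟩ := Finset.mem_image.mp h0
    obtain ⟨p, -, hpe⟩ := Finset.mem_image.mp h1
    have hlt : d - s < d := by omega
    have hge : ¬ ((⟨d - s, hlt⟩ : Fin d) : ℕ) < d - s := by simp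
    have h1 := congrFun hpe ⟨d - s, hlt⟩
    rw [glue_ge hsdle _ _ _ hge, glue_ge hsdle _ _ _ hge] at h1
    simp at h1
  have hc0 : F0.card = ∑ i ∈ Finset.range (d / 2 - s + 1), (d - s).choose i := by
    rw [hF0, Finset.card_image_of_injective _ (fun a b hab => glue_inj_left hab),
      card_wt_le_sum]
  have hc1 : F1.card = (∑ i ∈ Finset.Icc (d / 2) (d - s), (d - s).choose i) * 2 ^ s := by
    rw [hF1, Finset.card_image_of_injective, Finset.card_product, card_wt_ge_sum]
    · congr 1
      simp [Finset.card_univ]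
    · rintro ⟨a, b⟩ ⟨a', b'⟩ hab
      have h1 := glue_inj_left hab
      have h2 := glue_inj_right hsdle hab
      simp only [Prod.mk.injEq]
      refine ⟨h1, funext fun j => ?_⟩
      have := congrFun h2 j
      simpa using this
  have hcard : (F0 ∪ F1).card
      = ∑ i ∈ Finset.range (d / 2 - s + 1), (d - s).choose i
        + 2 ^ s * ∑ i ∈ Finset.Icc (d / 2) (d - s), (d - s).choose i := by
    rw [Finset.card_union_of_disjoint hdisj, hc0, hc1, Nat.mul_comm]
  rw [nkd]
  apply le_csSup
  · refine ⟨Fintype.card (JString d), ?_⟩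
    rintro m ⟨F, -, rfl⟩
    exact F.card_le_univ
  · exact ⟨F0 ∪ F1, fun u hu v hv huv => part1 u (hsub u hu) v (hsub v hv) huv, hcard⟩
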